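/- Fix δ ∈ (0,1/3], let μ be the Borel measure on ℝ determined by μ([j + i·3^{−n}, j + (i+1)·3^{−n})) = δ^{n−k(i)}(1−2δ)^{k(i)} for all integers j, n ≥ 0 and 0 ≤ i < 3^n (where k(i) is the number of digits equal to 1 among the first n ternary digits of i), and let ν = μ × ⋯ × μ be the d-fold product measure on ℝ^d. Then ν is a doubling measure on ℝ^d: there is a constant C < ∞, depending only on δ and d, such that ν(B(x,2r)) ≤ C·ν(B(x,r)) for all x ∈ ℝ^d and r > 0. -/

import Mathlib

open MeasureTheory Set

noncomputable section

/-- The number of ternary (base-3) digits of `i` equal to `1`. -/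
def ternaryOnes (i : ℕ) : ℕ := (Nat.digits 3 i).count 1

/-- The triadic mass assignment determining the measure `μ`. -/
def ternarySpec (δ : ℝ) (μ : Measure ℝ) : Prop :=
  ∀ (j : ℤ) (n i : ℕ), i < 3 ^ n →
    μ (Set.Ico ((j : ℝ) + (i : ℝ) / 3 ^ n) ((j : ℝ) + ((i : ℝ) + 1) / 3 ^ n)) =
      ENNReal.ofReal (δ ^ (n - ternaryOnes i) * (1 - 2 * δ) ^ ternaryOnes i)

/-- A Borel measure `ν` on a metric space is *doubling* if there is a finite constant `C`
such that `ν (B(x, 2r)) ≤ C * ν (B(x, r))` for every center `x` and every radius `r > 0`. -/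
def IsDoubling {X : Type*} [PseudoMetricSpace X] [MeasurableSpace X] (ν : Measure X) : Prop :=
  ∃ C : NNReal, ∀ (x : X) (r : ℝ), 0 < r → ν (Metric.ball x (2 * r)) ≤ C * ν (Metric.ball x r)

/-- The `d`-fold product `ν = μ × ⋯ × μ` of the triadic measure `μ`, viewed as a measure on
Euclidean space `ℝ^d`. -/
def nuProd (d : ℕ) (μ : Measure ℝ) : Measure (EuclideanSpace ℝ (Fin d)) :=
  Measure.map (MeasurableEquiv.toLp 2 (Fin d → ℝ)) (Measure.pi fun _ : Fin d => μ)

open ENNReal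

set_option linter.unusedSectionVars false
set_option linter.unusedTactic false

lemma ternaryOnes_zero : ternaryOnes 0 = 0 := by simp [ternaryOnes]

lemma ternaryOnes_eq (i : ℕ) (hi : 0 < i) :
    ternaryOnes i = ternaryOnes (i / 3) + (if i % 3 = 1 then 1 else 0) := by
  unfold ternaryOnes
  rw [Nat.digits_def' (by norm_num) hi, List.count_cons]
  have h3 : i % 3 = 0 ∨ i % 3 = 1 ∨ i % 3 = 2 := by omega
  rcases h3 with h | h | h <;> simp [h, Nat.add_comm]

lemma ternaryOnes_adj : ∀ i : ℕ,
    ternaryOnes (i + 1) ≤ ternaryOnes i + 1 ∧ ternaryOnes i ≤ ternaryOnes (i + 1) + 1 := by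
  intro i
  induction i using Nat.strong_induction_on with
  | _ i ih =>
    rcases Nat.eq_zero_or_pos i with rfl | hi
    · simp [ternaryOnes]
    have h3 : i % 3 = 0 ∨ i % 3 = 1 ∨ i % 3 = 2 := by omega
    rcases h3 with h | h | h
    · have h1 : (i+1) % 3 = 1 := by omega
      have h2 : (i+1) / 3 = i / 3 := by omega
      rw [ternaryOnes_eq i hi, ternaryOnes_eq (i+1) (by omega), h1, h2, h]
      norm_num
      omega
    · have h1 : (i+1) % 3 = 2 := by omega
      have h2 : (i+1) / 3 = i / 3 := by omega
      rw [ternaryOnes_eq i hi, ternaryOnes_eq (i+1) (by omega), h1, h2, h]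
      norm_num
      omega
    · have h1 : (i+1) % 3 = 0 := by omega
      have h2 : (i+1) / 3 = i / 3 + 1 := by omega
      have := ih (i / 3) (by omega)
      rw [ternaryOnes_eq i hi, ternaryOnes_eq (i+1) (by omega), h1, h2, h]
      simp only [if_neg (by norm_num : ¬(2:ℕ) = 1), if_neg (by norm_num : ¬(0:ℕ) = 1)]
      omega

lemma ternaryOnes_le {n i : ℕ} (h : i < 3 ^ n) : ternaryOnes i ≤ n := by
  induction n generalizing i with
  | zero => interval_cases i; simp [ternaryOnes]
  | succ n ih =>
    rcases Nat.eq_zero_or_pos i with rfl | hi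
    · simp [ternaryOnes]
    rw [ternaryOnes_eq i hi]
    have : i / 3 < 3 ^ n := by
      rw [Nat.div_lt_iff_lt_mul (by norm_num)]
      calc i < 3 ^ (n+1) := h
        _ = 3 ^ n * 3 := by ring
    have h4 := ih this
    split <;> omega

lemma ternaryOnes_pow_sub_one : ∀ n : ℕ, ternaryOnes (3 ^ n - 1) = 0 := by
  intro n
  induction n with
  | zero => simp [ternaryOnes]
  | succ n ih =>
    have h3 : 1 ≤ 3 ^ n := Nat.one_le_pow _ _ (by norm_num)
    have key : 3 ^ (n+1) - 1 = 3 * (3 ^ n - 1) + 2 := by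
      have : 3 ^ (n+1) = 3 * 3 ^ n := by ring
      omega
    rw [key, ternaryOnes_eq _ (by omega)]
    have h1 : (3 * (3 ^ n - 1) + 2) % 3 = 2 := by omega
    have h2 : (3 * (3 ^ n - 1) + 2) / 3 = 3 ^ n - 1 := by omega
    rw [h1, h2, ih]
    simp


section W
variable {δ : ℝ} (hδ0 : 0 < δ) (hδ : δ ≤ 1 / 3)

/-- weight of a level-`n` interval whose index has `k` ones -/
def wpow (δ : ℝ) (n k : ℕ) : ℝ := δ ^ (n - k) * (1 - 2 * δ) ^ k

include hδ0 hδ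

lemma one_sub_pos : (0:ℝ) < 1 - 2 * δ := by linarith

lemma delta_le : δ ≤ 1 - 2 * δ := by linarith

lemma wpow_pos (n k : ℕ) : 0 < wpow δ n k := by
  have := one_sub_pos hδ0 hδ
  unfold wpow; positivity

lemma wpow_succ {n k : ℕ} (h : k + 1 ≤ n) :
    wpow δ n (k + 1) = (1 - 2 * δ) / δ * wpow δ n k := by
  unfold wpow
  have h1 : n - k = (n - (k+1)) + 1 := by omega
  rw [h1, pow_succ, pow_succ]
  field_simp

lemma wpow_mono {n : ℕ} : ∀ {k k' : ℕ}, k ≤ k' → k' ≤ n → wpow δ n k ≤ wpow δ n k' := by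
  intro k k' hk hk'
  induction k' with
  | zero => simp_all
  | succ m ih =>
    rcases Nat.eq_or_lt_of_le hk with rfl | hlt
    · exact le_refl _
    · calc wpow δ n k ≤ wpow δ n m := ih (by omega) (by omega)
        _ ≤ wpow δ n (m+1) := by
            rw [wpow_succ hδ0 hδ hk']
            have hR : (1:ℝ) ≤ (1 - 2*δ)/δ := by
              rw [le_div_iff₀ hδ0]; linarith
            nlinarith [wpow_pos hδ0 hδ (n := n) (k := m), hR]

lemma wpow_step {n k k' : ℕ} (h : k' ≤ k + 1) (hk : k ≤ n) (hk' : k' ≤ n) :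
    wpow δ n k' ≤ (1 - 2 * δ) / δ * wpow δ n k := by
  have hR : (1:ℝ) ≤ (1 - 2*δ)/δ := by rw [le_div_iff₀ hδ0]; linarith
  rcases le_or_gt k' k with hle | hlt
  · calc wpow δ n k' ≤ wpow δ n k := wpow_mono hδ0 hδ hle hk
      _ ≤ (1 - 2*δ)/δ * wpow δ n k :=
        le_mul_of_one_le_left (wpow_pos hδ0 hδ _ _).le hR
  · have : k' = k + 1 := by omega
    subst this
    rw [wpow_succ hδ0 hδ hk']

end W


/-- mass of the `t`-th triadic interval of level `n` (indexed over `ℤ`) -/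
noncomputable def gridMass (δ : ℝ) (n : ℕ) (t : ℤ) : ℝ :=
  wpow δ n (ternaryOnes (t % (3^n : ℤ)).toNat)

section G
variable {δ : ℝ} (hδ0 : 0 < δ) (hδ : δ ≤ 1 / 3)

lemma emod_facts (n : ℕ) (t : ℤ) :
    0 ≤ t % (3^n : ℤ) ∧ t % (3^n : ℤ) < 3^n ∧ ((t % (3^n : ℤ)).toNat : ℕ) < 3^n := by
  have hp : (0:ℤ) < 3^n := by positivity
  have h1 : 0 ≤ t % (3^n : ℤ) := Int.emod_nonneg t (ne_of_gt hp)
  have h2 : t % (3^n : ℤ) < 3^n := Int.emod_lt_of_pos t hp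
  refine ⟨h1, h2, ?_⟩
  have : ((3^n : ℕ) : ℤ) = (3^n : ℤ) := by push_cast; ring
  omega

include hδ0 hδ

lemma gridMass_pos (n : ℕ) (t : ℤ) : 0 < gridMass δ n t := wpow_pos hδ0 hδ _ _

lemma gridMass_step (n : ℕ) (t : ℤ) :
    gridMass δ n (t+1) ≤ (1 - 2*δ)/δ * gridMass δ n t ∧
    gridMass δ n t ≤ (1 - 2*δ)/δ * gridMass δ n (t+1) := by
  have hp : (0:ℤ) < 3^n := by positivity
  obtain ⟨h1, h2, h3⟩ := emod_facts n t
  obtain ⟨i, hi⟩ : ∃ i : ℕ, (t % (3^n : ℤ)).toNat = i := ⟨_, rfl⟩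
  rw [hi] at h3
  have hmm : (t % (3^n:ℤ)) % (3^n:ℤ) = t % (3^n:ℤ) := Int.emod_emod_of_dvd t dvd_rfl
  have hmod : (t+1) % (3^n : ℤ) = (t % (3^n:ℤ) + 1) % (3^n : ℤ) :=
    (Int.ModEq.add_right 1 hmm).symm
  have hR : (1:ℝ) ≤ (1 - 2*δ)/δ := by rw [le_div_iff₀ hδ0]; linarith
  rcases lt_or_eq_of_le (by omega : (i:ℤ) + 1 ≤ 3^n) with hlt | heq
  · have hmod2 : (t+1) % (3^n : ℤ) = (i:ℤ) + 1 := by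
      rw [hmod]
      have h5 : t % (3^n:ℤ) = (i:ℤ) := by omega
      rw [h5, Int.emod_eq_of_lt (by omega) hlt]
    have htn : ((t+1) % (3^n : ℤ)).toNat = i + 1 := by omega
    have hin : i + 1 < 3^n := by
      have : ((3^n : ℕ) : ℤ) = (3^n : ℤ) := by push_cast; ring
      omega
    unfold gridMass
    rw [htn, hi]
    obtain ⟨ha1, ha2⟩ := ternaryOnes_adj i
    exact ⟨wpow_step hδ0 hδ ha1 (ternaryOnes_le (by omega)) (ternaryOnes_le hin),
           wpow_step hδ0 hδ ha2 (ternaryOnes_le hin) (ternaryOnes_le (by omega))⟩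
  · -- i = 3^n - 1, wraps to 0
    have hmod2 : (t+1) % (3^n : ℤ) = 0 := by
      rw [hmod]
      have : t % (3^n:ℤ) + 1 = 3^n := by omega
      rw [this, Int.emod_self]
    have hie : i = 3^n - 1 := by
      have : ((3^n : ℕ) : ℤ) = (3^n : ℤ) := by push_cast; ring
      omega
    unfold gridMass
    rw [hmod2, hi, hie]
    simp only [Int.toNat_zero, ternaryOnes_zero, ternaryOnes_pow_sub_one]
    constructor <;>
      exact le_mul_of_one_le_left (wpow_pos hδ0 hδ _ _).le hR

lemma gridMass_chain (n : ℕ) : ∀ (k : ℕ) (t m : ℤ), m.natAbs ≤ k →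
    gridMass δ n (t + m) ≤ ((1 - 2*δ)/δ)^k * gridMass δ n t := by
  have hR : (1:ℝ) ≤ (1 - 2*δ)/δ := by rw [le_div_iff₀ hδ0]; linarith
  intro k
  induction k with
  | zero =>
    intro t m hm
    have : m = 0 := by omega
    simp [this]
  | succ k ih =>
    intro t m hm
    rcases lt_trichotomy m 0 with hneg | rfl | hpos
    · have h1 := (gridMass_step hδ0 hδ n (t + m)).2
      have h2 := ih t (m+1) (by omega)
      calc gridMass δ n (t + m) ≤ (1-2*δ)/δ * gridMass δ n (t + m + 1) := h1
        _ = (1-2*δ)/δ * gridMass δ n (t + (m+1)) := by ring_nf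
        _ ≤ (1-2*δ)/δ * (((1 - 2*δ)/δ)^k * gridMass δ n t) := by
            apply mul_le_mul_of_nonneg_left h2 (by linarith)
        _ = ((1-2*δ)/δ)^(k+1) * gridMass δ n t := by ring
    · have hpos1 : 0 < gridMass δ n t := gridMass_pos hδ0 hδ n t
      have h6 : (1:ℝ) ≤ ((1-2*δ)/δ)^(k+1) := one_le_pow₀ hR
      simpa using le_mul_of_one_le_left hpos1.le h6
    · have h1 := (gridMass_step hδ0 hδ n (t + (m-1))).1
      have h2 := ih t (m-1) (by omega)
      calc gridMass δ n (t + m) = gridMass δ n (t + (m-1) + 1) := by ring_nf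
        _ ≤ (1-2*δ)/δ * gridMass δ n (t + (m-1)) := h1
        _ ≤ (1-2*δ)/δ * (((1 - 2*δ)/δ)^k * gridMass δ n t) := by
            apply mul_le_mul_of_nonneg_left h2 (by linarith)
        _ = ((1-2*δ)/δ)^(k+1) * gridMass δ n t := by ring

end G


section M
variable {δ : ℝ} {μ : Measure ℝ} (hμ : ternarySpec δ μ)
include hμ

lemma grid_eq (n : ℕ) (t : ℤ) :
    μ (Ico ((t:ℝ)/3^n) (((t:ℝ)+1)/3^n)) = ENNReal.ofReal (gridMass δ n t) := by
  have hp : (0:ℤ) < 3^n := by positivity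
  have key := Int.mul_ediv_add_emod t (3^n : ℤ)
  set q : ℤ := t / (3^n : ℤ) with hq
  set r : ℤ := t % (3^n : ℤ) with hr
  have h1 : 0 ≤ r := Int.emod_nonneg t (ne_of_gt hp)
  have h2 : r < 3^n := Int.emod_lt_of_pos t hp
  set i : ℕ := r.toNat with hi
  have hir : (i:ℤ) = r := Int.toNat_of_nonneg h1
  have hcast : ((3^n : ℕ) : ℤ) = (3^n : ℤ) := by push_cast; ring
  have hilt : i < 3^n := by omega
  rw [← hir] at key
  have ht : t = (3^n : ℤ) * q + (i : ℤ) := key.symm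
  have hreal : (t : ℝ) = 3^n * (q:ℝ) + (i:ℝ) := by
    have := congrArg (Int.cast : ℤ → ℝ) ht
    push_cast at this
    linarith
  have h3pos : (0:ℝ) < 3^n := by positivity
  have e1 : (t:ℝ)/3^n = (q:ℝ) + (i:ℝ)/3^n := by
    rw [hreal]; field_simp
  have e2 : ((t:ℝ)+1)/3^n = (q:ℝ) + ((i:ℝ)+1)/3^n := by
    rw [hreal]; field_simp; ring
  rw [e1, e2, hμ q n i hilt]
  rfl

lemma unit_eq (j : ℤ) : μ (Ico (j:ℝ) ((j:ℝ)+1)) = 1 := by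
  have := hμ j 0 0 (by norm_num)
  simp only [pow_zero, Nat.cast_zero, zero_div, add_zero, zero_add, div_one] at this
  rw [this, ternaryOnes_zero]
  simp

lemma int_len (j : ℤ) : ∀ m : ℕ, μ (Ico (j:ℝ) ((j:ℝ)+m)) = m := by
  intro m
  induction m with
  | zero => simp
  | succ m ih =>
    have hm0 : (0:ℝ) ≤ m := Nat.cast_nonneg m
    have hcst : ((m:ℕ)+1 : ℝ) = (m:ℝ)+1 := by push_cast; ring
    have hsplit : Ico (j:ℝ) ((j:ℝ)+((m:ℝ)+1)) =
        Ico (j:ℝ) ((j:ℝ)+m) ∪ Ico ((j:ℝ)+m) ((j:ℝ)+((m:ℝ)+1)) :=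
      (Set.Ico_union_Ico_eq_Ico (by linarith) (by linarith)).symm
    have hone : μ (Ico ((j:ℝ)+m) ((j:ℝ)+((m:ℝ)+1))) = 1 := by
      rw [show ((j:ℝ)+m) = (((j+(m:ℤ)):ℤ):ℝ) by push_cast; ring,
          show ((j:ℝ)+((m:ℝ)+1)) = (((j+(m:ℤ)):ℤ):ℝ)+1 by push_cast; ring]
      exact unit_eq hμ _
    rw [show ((m+1:ℕ):ℝ) = (m:ℝ)+1 by push_cast; ring, hsplit,
        measure_union (Set.Ico_disjoint_Ico_same) measurableSet_Ico, ih, hone]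
    push_cast
    ring

/-- `μ` is sigma-finite. -/
lemma sf : SigmaFinite μ := by
  refine ⟨⟨⟨fun n => Ico (-(n:ℝ)) (n:ℝ), fun _ => trivial, fun n => ?_, ?_⟩⟩⟩
  · show μ (Ico (-(n:ℝ)) (n:ℝ)) < ⊤
    have : Ico (-(n:ℝ)) (n:ℝ) = Ico (((-(n:ℤ)):ℤ):ℝ) ((((-(n:ℤ)):ℤ):ℝ) + ((2*n:ℕ):ℝ)) := by
      push_cast; ring_nf
    rw [this, int_len hμ]
    exact lt_top_iff_ne_top.2 (ENNReal.natCast_ne_top _)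
  · apply Set.eq_univ_of_forall
    intro x
    obtain ⟨n, hn⟩ := exists_nat_gt |x| 
    exact Set.mem_iUnion.2 ⟨n, by simp only [mem_Ico]; constructor <;> [nlinarith [abs_nonneg x, neg_abs_le x]; nlinarith [le_abs_self x]]⟩

end M


section D
variable {δ : ℝ} {μ : Measure ℝ} (hδ0 : 0 < δ) (hδ : δ ≤ 1 / 3) (hμ : ternarySpec δ μ)

lemma exists_scale {r : ℝ} (hr0 : 0 < r) (hr3 : r < 3) :
    ∃ n : ℕ, 1 ≤ r * 3^n ∧ r * 3^n < 3 := by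
  have hex : ∃ n : ℕ, 1 ≤ r * 3^n := by
    obtain ⟨n, hn⟩ := pow_unbounded_of_one_lt (1/r) (by norm_num : (1:ℝ) < 3)
    exact ⟨n, by rw [div_lt_iff₀ hr0] at hn; nlinarith⟩
  classical
  let n := Nat.find hex
  have h1 : 1 ≤ r * 3^n := Nat.find_spec hex
  refine ⟨n, h1, ?_⟩
  match hn : n with
  | 0 => simpa using hr3
  | m+1 =>
    have h2 : ¬ (1 ≤ r * 3^m) := Nat.find_min hex (by omega)
    push_neg at h2
    have : (3:ℝ)^(m+1) = 3 * 3^m := by ring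
    rw [this]
    nlinarith

include hδ0 hδ hμ

set_option linter.unusedSectionVars false in
lemma small_case {x r : ℝ} (hr0 : 0 < r) (hr3 : r < 3) :
    μ (Metric.ball x (2*r)) ≤
      (13 * ENNReal.ofReal (((1-2*δ)/δ)^6)) * μ (Metric.ball x r) := by
  obtain ⟨n, hn1, hn3⟩ := exists_scale hr0 hr3
  have h3pos : (0:ℝ) < 3^n := by positivity
  set t₀ : ℤ := ⌊x * 3^n⌋ with ht₀
  have hf1 : (t₀:ℝ) ≤ x * 3^n := Int.floor_le _
  have hf2 : x * 3^n < t₀ + 1 := Int.lt_floor_add_one _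
  -- lower bound
  have hlow : ENNReal.ofReal (gridMass δ n t₀) ≤ μ (Metric.ball x r) := by
    rw [← grid_eq (δ := δ) (μ := μ) hμ n t₀]
    apply measure_mono
    rw [Real.ball_eq_Ioo]
    rintro y ⟨hy1, hy2⟩
    have hr' : 1/3^n ≤ r := by rw [div_le_iff₀ h3pos]; linarith
    rw [div_le_iff₀ h3pos] at hy1
    rw [lt_div_iff₀ h3pos] at hy2
    constructor
    · nlinarith
    · nlinarith
  -- upper bound: covering by 13 grid intervals
  have hcov : Metric.ball x (2*r) ⊆
      ⋃ k ∈ Finset.range 13, Ico (((t₀:ℝ)-6+(k:ℝ))/3^n) (((t₀:ℝ)-6+(k:ℝ)+1)/3^n) := by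
    rw [Real.ball_eq_Ioo]
    rintro y ⟨hy1, hy2⟩
    have hdist : |y*3^n - x*3^n| < 6 := by
      rw [abs_lt]; constructor <;> nlinarith
    rw [abs_lt] at hdist
    set t : ℤ := ⌊y * 3^n⌋ with htdef
    have hg1 : (t:ℝ) ≤ y * 3^n := Int.floor_le _
    have hg2 : y * 3^n < t + 1 := Int.lt_floor_add_one _
    have hb1 : t < t₀ + 7 := by exact_mod_cast (show ((t:ℤ):ℝ) < ((t₀+7:ℤ):ℝ) by push_cast; linarith)
    have hb2 : t₀ - 7 < t := by exact_mod_cast (show ((t₀-7:ℤ):ℝ) < ((t:ℤ):ℝ) by push_cast; linarith)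
    apply Set.mem_biUnion (Finset.mem_range.2 (show (t - (t₀-6)).toNat < 13 by omega))
    have h9 : ((t - (t₀-6)).toNat : ℤ) = t - (t₀-6) := Int.toNat_of_nonneg (by omega)
    have h9R : (((t - (t₀-6)).toNat : ℕ) : ℝ) = (t:ℝ) - ((t₀:ℝ)-6) := by exact_mod_cast h9
    constructor
    · rw [div_le_iff₀ h3pos, h9R]; linarith
    · rw [lt_div_iff₀ h3pos, h9R]; linarith
  have hup : μ (Metric.ball x (2*r)) ≤
      13 * ENNReal.ofReal (((1-2*δ)/δ)^6 * gridMass δ n t₀) := by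
    calc μ (Metric.ball x (2*r)) ≤
        ∑ k ∈ Finset.range 13, μ (Ico (((t₀:ℝ)-6+(k:ℝ))/3^n) (((t₀:ℝ)-6+(k:ℝ)+1)/3^n)) :=
          (measure_mono hcov).trans (measure_biUnion_finset_le _ _)
      _ ≤ ∑ _k ∈ Finset.range 13, ENNReal.ofReal (((1-2*δ)/δ)^6 * gridMass δ n t₀) := by
          apply Finset.sum_le_sum
          intro k hk
          have hcast : ((t₀:ℝ)-6+(k:ℝ)) = (((t₀ - 6 + (k:ℤ)):ℤ):ℝ) := by push_cast; ring
          rw [hcast, grid_eq (δ := δ) (μ := μ) hμ n _]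
          apply ENNReal.ofReal_le_ofReal
          have ht : t₀ - 6 + (k:ℤ) = t₀ + (-6 + (k:ℤ)) := by ring
          rw [ht]
          exact gridMass_chain hδ0 hδ n 6 t₀ (-6+(k:ℤ))
            (by have := Finset.mem_range.1 hk; omega)
      _ = 13 * ENNReal.ofReal (((1-2*δ)/δ)^6 * gridMass δ n t₀) := by
          rw [Finset.sum_const, Finset.card_range]
          simp [nsmul_eq_mul]
  calc μ (Metric.ball x (2*r)) ≤ 13 * ENNReal.ofReal (((1-2*δ)/δ)^6 * gridMass δ n t₀) := hup
    _ = 13 * ENNReal.ofReal (((1-2*δ)/δ)^6) * ENNReal.ofReal (gridMass δ n t₀) := by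
        rw [ENNReal.ofReal_mul (by positivity)]; ring
    _ ≤ 13 * ENNReal.ofReal (((1-2*δ)/δ)^6) * μ (Metric.ball x r) := mul_le_mul_right hlow _

set_option linter.unusedSectionVars false in
lemma large_case {x r : ℝ} (hr3 : 3 ≤ r) :
    μ (Metric.ball x (2*r)) ≤ 5 * μ (Metric.ball x r) := by
  obtain ⟨a, ha⟩ : ∃ a : ℤ, a = ⌊x - r⌋ + 1 := ⟨_, rfl⟩
  obtain ⟨b, hb⟩ : ∃ b : ℤ, b = ⌊x + r⌋ := ⟨_, rfl⟩
  obtain ⟨c, hc⟩ : ∃ c : ℤ, c = ⌊x - 2*r⌋ := ⟨_, rfl⟩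
  obtain ⟨e, he⟩ : ∃ e : ℤ, e = ⌊x + 2*r⌋ + 1 := ⟨_, rfl⟩
  have haR1 : x - r < (a:ℝ) := by rw [ha]; push_cast; linarith [Int.lt_floor_add_one (x - r)]
  have haR2 : (a:ℝ) ≤ x - r + 1 := by rw [ha]; push_cast; linarith [Int.floor_le (x - r)]
  have hbR1 : x + r - 1 < (b:ℝ) := by rw [hb]; linarith [Int.lt_floor_add_one (x + r)]
  have hbR2 : (b:ℝ) ≤ x + r := by rw [hb]; exact Int.floor_le _
  have hcR1 : (c:ℝ) ≤ x - 2*r := by rw [hc]; exact Int.floor_le _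
  have hcR2 : x - 2*r - 1 < (c:ℝ) := by rw [hc]; linarith [Int.lt_floor_add_one (x - 2*r)]
  have heR1 : x + 2*r < (e:ℝ) := by
    rw [he]; push_cast; linarith [Int.lt_floor_add_one (x + 2*r)]
  have heR2 : (e:ℝ) ≤ x + 2*r + 1 := by rw [he]; push_cast; linarith [Int.floor_le (x + 2*r)]
  have hab : (4:ℤ) ≤ b - a := by
    exact_mod_cast (show ((4:ℤ):ℝ) ≤ ((b - a:ℤ):ℝ) by push_cast; linarith)
  have hec0 : (0:ℤ) ≤ e - c := by
    exact_mod_cast (show ((0:ℤ):ℝ) ≤ ((e - c:ℤ):ℝ) by push_cast; linarith)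
  have hkey : e - c ≤ 5 * (b - a) := by
    exact_mod_cast (show ((e - c:ℤ):ℝ) ≤ ((5 * (b - a):ℤ):ℝ) by push_cast; linarith)
  have hlow : ((b - a).toNat : ℝ≥0∞) ≤ μ (Metric.ball x r) := by
    rw [← int_len (δ := δ) (μ := μ) hμ a (b-a).toNat]
    apply measure_mono
    rw [Real.ball_eq_Ioo]
    have hba : (((b-a).toNat : ℕ) : ℝ) = (b:ℝ) - (a:ℝ) := by
      have : ((b-a).toNat : ℤ) = b - a := Int.toNat_of_nonneg (by omega)
      exact_mod_cast this
    rintro y ⟨hy1, hy2⟩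
    exact ⟨by linarith, by linarith [hba]⟩
  have hup : μ (Metric.ball x (2*r)) ≤ ((e - c).toNat : ℝ≥0∞) := by
    rw [← int_len (δ := δ) (μ := μ) hμ c (e-c).toNat]
    apply measure_mono
    rw [Real.ball_eq_Ioo]
    have hec : (((e-c).toNat : ℕ) : ℝ) = (e:ℝ) - (c:ℝ) := by
      have : ((e-c).toNat : ℤ) = e - c := Int.toNat_of_nonneg (by omega)
      exact_mod_cast this
    rintro y ⟨hy1, hy2⟩
    exact ⟨by linarith, by linarith [hec]⟩
  calc μ (Metric.ball x (2*r)) ≤ ((e - c).toNat : ℝ≥0∞) := hup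
    _ ≤ 5 * ((b - a).toNat : ℝ≥0∞) := by
        have hnat : (e - c).toNat ≤ 5 * (b - a).toNat := by omega
        calc ((e - c).toNat : ℝ≥0∞) ≤ ((5 * (b - a).toNat : ℕ) : ℝ≥0∞) := by
              exact_mod_cast Nat.cast_le.2 hnat
          _ = 5 * ((b - a).toNat : ℝ≥0∞) := by push_cast; ring
    _ ≤ 5 * μ (Metric.ball x r) := mul_le_mul_right hlow _

lemma oneD : ∃ K : ℝ≥0∞, K ≠ ⊤ ∧
    ∀ (x r : ℝ), 0 < r → μ (Metric.ball x (2*r)) ≤ K * μ (Metric.ball x r) := by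
  refine ⟨13 * ENNReal.ofReal (((1-2*δ)/δ)^6) + 5, ?_, ?_⟩
  · exact ENNReal.add_ne_top.2 ⟨ENNReal.mul_ne_top (by norm_num) ENNReal.ofReal_ne_top,
      by norm_num⟩
  intro x r hr
  rcases lt_or_ge r 3 with h3 | h3
  · exact (small_case hδ0 hδ hμ hr h3).trans (mul_le_mul_left le_self_add _)
  · exact (large_case hδ0 hδ hμ h3).trans (mul_le_mul_left le_add_self _)

end D

section P

lemma iter_doubling {μ : Measure ℝ} {K : ℝ≥0∞}
    (hdb : ∀ (x r : ℝ), 0 < r → μ (Metric.ball x (2*r)) ≤ K * μ (Metric.ball x r)) :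
    ∀ (j : ℕ) (x r : ℝ), 0 < r → μ (Metric.ball x (2^j * r)) ≤ K^j * μ (Metric.ball x r) := by
  intro j
  induction j with
  | zero => intro x r _; simp
  | succ j ih =>
    intro x r hr
    have h1 : (2:ℝ)^(j+1) * r = 2 * (2^j * r) := by ring
    calc μ (Metric.ball x (2^(j+1) * r)) = μ (Metric.ball x (2 * (2^j * r))) := by rw [h1]
      _ ≤ K * μ (Metric.ball x (2^j * r)) := hdb x _ (by positivity)
      _ ≤ K * (K^j * μ (Metric.ball x r)) := mul_le_mul_right (ih x r hr) _
      _ = K^(j+1) * μ (Metric.ball x r) := by rw [pow_succ]; ring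

theorem prod_doubling (d : ℕ) (hd : 2 ≤ d) (μ : Measure ℝ) [SigmaFinite μ]
    (K : ℝ≥0∞) (hK : K ≠ ⊤)
    (hdb : ∀ (x r : ℝ), 0 < r → μ (Metric.ball x (2*r)) ≤ K * μ (Metric.ball x r)) :
    IsDoubling (nuProd d μ) := by
  classical
  have hdpos : (0:ℝ) < d := by exact_mod_cast (by omega : 0 < d)
  have hd1 : (1:ℝ) ≤ d := by exact_mod_cast (by omega : 1 ≤ d)
  have hsd : 0 < Real.sqrt d := Real.sqrt_pos.2 hdpos
  set e := (MeasurableEquiv.toLp 2 (Fin d → ℝ)).symm with he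
  set π := Measure.pi (fun _ : Fin d => μ) with hπ
  have hmap : ∀ S : Set (EuclideanSpace ℝ (Fin d)), nuProd d μ S = π (e.symm ⁻¹' S) :=
    fun S => MeasurableEquiv.map_apply _ _
  have hA : ∀ (z : EuclideanSpace ℝ (Fin d)) (s : ℝ),
      e.symm ⁻¹' Metric.ball z s ⊆ univ.pi (fun i => Metric.ball (z i) s) := by
    intro z s f hf i _
    simp only [mem_preimage, Metric.mem_ball] at hf ⊢
    have hci : (e.symm f) i = f i := rfl
    rw [← hci]
    refine lt_of_le_of_lt ?_ hf
    rw [EuclideanSpace.dist_eq]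
    have h3 : dist ((e.symm f) i) (z i) ^ 2 ≤ ∑ j, dist ((e.symm f) j) (z j) ^ 2 :=
      Finset.single_le_sum (f := fun j => dist ((e.symm f) j) (z j) ^ 2)
        (fun j _ => sq_nonneg _) (Finset.mem_univ i)
    calc dist ((e.symm f) i) (z i) = Real.sqrt (dist ((e.symm f) i) (z i) ^ 2) := by
          rw [Real.sqrt_sq dist_nonneg]
      _ ≤ _ := Real.sqrt_le_sqrt h3
  have hB : ∀ (z : EuclideanSpace ℝ (Fin d)) (s : ℝ), 0 < s →
      univ.pi (fun i => Metric.ball (z i) (s / Real.sqrt d)) ⊆ e.symm ⁻¹' Metric.ball z s := by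
    intro z s hs f hf
    simp only [mem_preimage, Metric.mem_ball]
    rw [EuclideanSpace.dist_eq]
    have hne : (Finset.univ : Finset (Fin d)).Nonempty := ⟨⟨0, by omega⟩, Finset.mem_univ _⟩
    have hsum : ∑ i, dist ((e.symm f) i) (z i) ^ 2 < s ^ 2 := by
      calc ∑ i, dist ((e.symm f) i) (z i) ^ 2 < ∑ _i : Fin d, (s / Real.sqrt d) ^ 2 := by
            apply Finset.sum_lt_sum_of_nonempty hne
            intro i _
            have hfi : dist (f i) (z i) < s / Real.sqrt d := hf i (mem_univ i)
            exact pow_lt_pow_left₀ hfi dist_nonneg (by norm_num)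
        _ = d * (s / Real.sqrt d) ^ 2 := by
            rw [Finset.sum_const, Finset.card_univ, Fintype.card_fin, nsmul_eq_mul]
        _ = s ^ 2 := by
            rw [div_pow, Real.sq_sqrt hdpos.le]
            field_simp
    calc Real.sqrt (∑ i, dist ((e.symm f) i) (z i) ^ 2) < Real.sqrt (s^2) :=
          Real.sqrt_lt_sqrt (Finset.sum_nonneg fun i _ => sq_nonneg _) hsum
      _ = s := Real.sqrt_sq hs.le
  -- key radius comparison
  have hrad : ∀ r : ℝ, 0 < r → 2 * r ≤ 2^(d+1) * (r / Real.sqrt d) := by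
    intro r hr
    have h1 : Real.sqrt d ≤ d := by
      nlinarith [Real.sq_sqrt hdpos.le, Real.one_le_sqrt.2 hd1, Real.sqrt_nonneg (d:ℝ)]
    have h2 : (d:ℝ) ≤ 2^d := by
      have := (Nat.lt_two_pow_self (n := d)).le
      exact_mod_cast (by exact_mod_cast this : ((d:ℕ):ℝ) ≤ ((2^d : ℕ):ℝ))
    rw [show (2:ℝ)^(d+1) * (r / Real.sqrt d) = (2^(d+1) * r) / Real.sqrt d by ring,
        le_div_iff₀ hsd, pow_succ]
    nlinarith
  refine ⟨((K^(d+1))^d).toNNReal, ?_⟩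
  intro x r hr
  have hKne : (K^(d+1))^d ≠ ⊤ := by
    exact ENNReal.pow_ne_top (ENNReal.pow_ne_top hK)
  have hcoe : ((((K^(d+1))^d).toNNReal : NNReal) : ℝ≥0∞) = (K^(d+1))^d :=
    ENNReal.coe_toNNReal hKne
  rw [hmap, hmap, hcoe]
  have hs : 0 < r / Real.sqrt d := by positivity
  calc π (e.symm ⁻¹' Metric.ball x (2*r))
      ≤ π (univ.pi fun i => Metric.ball (x i) (2*r)) := measure_mono (hA x (2*r))
    _ = ∏ i, μ (Metric.ball (x i) (2*r)) := Measure.pi_pi _ _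
    _ ≤ ∏ i, (K^(d+1) * μ (Metric.ball (x i) (r / Real.sqrt d))) := by
        apply Finset.prod_le_prod'
        intro i _
        calc μ (Metric.ball (x i) (2*r))
            ≤ μ (Metric.ball (x i) (2^(d+1) * (r / Real.sqrt d))) :=
              measure_mono (Metric.ball_subset_ball (hrad r hr))
          _ ≤ K^(d+1) * μ (Metric.ball (x i) (r / Real.sqrt d)) :=
              iter_doubling hdb (d+1) (x i) _ hs
    _ = (K^(d+1))^d * π (univ.pi fun i => Metric.ball (x i) (r / Real.sqrt d)) := by
        rw [Finset.prod_mul_distrib, Finset.prod_const, Finset.card_univ, Fintype.card_fin,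
          Measure.pi_pi]
    _ ≤ (K^(d+1))^d * π (e.symm ⁻¹' Metric.ball x r) :=
        mul_le_mul_right (measure_mono (hB x r hr)) _

end P

/-- The `d`-fold product of the triadic measure `μ` is a doubling measure on `ℝ^d`. -/
theorem product_ternary_measure_is_doubling (d : ℕ) (hd : 2 ≤ d) (δ : ℝ)
    (hδ0 : 0 < δ) (hδ : δ ≤ 1 / 3) (μ : Measure ℝ) (hμ : ternarySpec δ μ) :
    IsDoubling (nuProd d μ) := by
  obtain ⟨K, hKne, hdb⟩ := oneD hδ0 hδ hμ
  haveI : SigmaFinite μ := sf hμ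
  exact prod_doubling d hd μ K hKne hdb
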